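/- Let K = (G,M,I) be a finite formal context and S = [(A,B),(C,D)] an interval of the concept lattice B(K). Let J̃ = I ∪ (C × B). Then the block relations J of K with J ⊇ J̃ are exactly the block relations whose corresponding complete tolerance relation θ on B(K) has a θ-block containing S, and the smallest block relation containing J̃ (which exists since block relations form a closure system) corresponds to the finest such tolerance relation. -/

import Mathlib

variable {G M : Type*}

/-- `J` is a block relation of the context `(G, M, I)`: it contains `I`, each row of `J` is an
intent of the context, and each column of `J` is an extent of the context. -/
def IsBlockRel (I J : G → M → Prop) : Prop :=
  (∀ g m, I g m → J g m) ∧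
  (∀ g : G, ∃ c : Concept G M I, {m | J g m} = c.intent) ∧
  (∀ m : M, ∃ c : Concept G M I, {g | J g m} = c.extent)

/-- The complete tolerance relation on the concept lattice corresponding to a block
relation `J`. -/
def tolOf (I J : G → M → Prop) (c d : Concept G M I) : Prop :=
  (∀ g ∈ c.extent, ∀ m ∈ d.intent, J g m) ∧ (∀ g ∈ d.extent, ∀ m ∈ c.intent, J g m)

/-- Let `S = [(A,B),(C,D)]` be an interval of the concept lattice of a finite
context `(G,M,I)` and `J̃ = I ∪ (C × B)`. The block relations containing `J̃` are exactly the
block relations whose corresponding complete tolerance relation has a block containing `S`;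
moreover the smallest block relation containing `J̃` exists and corresponds to the finest such
tolerance relation. -/
theorem block_relations_imploding_interval [Finite G] [Finite M] (I : G → M → Prop)
    (c₁ c₂ : Concept G M I) (hc : c₁ ≤ c₂)
    (Jt : G → M → Prop) (hJt : ∀ g m, Jt g m ↔ (I g m ∨ (g ∈ c₂.extent ∧ m ∈ c₁.intent))) :
    (∀ J : G → M → Prop, IsBlockRel I J →
      ((∀ g m, Jt g m → J g m) ↔
        ∀ c ∈ Set.Icc c₁ c₂, ∀ d ∈ Set.Icc c₁ c₂, tolOf I J c d)) ∧
    (∃ J₀ : G → M → Prop, IsBlockRel I J₀ ∧ (∀ g m, Jt g m → J₀ g m) ∧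
      ∀ J : G → M → Prop, IsBlockRel I J → (∀ g m, Jt g m → J g m) →
        (∀ g m, J₀ g m → J g m) ∧ (∀ c d, tolOf I J₀ c d → tolOf I J c d)) := by
  constructor
  · intro J hJ
    constructor
    · intro h c hcmem d hdmem
      refine ⟨fun g hg m hm => ?_, fun g hg m hm => ?_⟩
      · exact h g m ((hJt g m).2 (Or.inr
          ⟨Concept.extent_subset_extent_iff.2 hcmem.2 hg, Concept.intent_subset_intent_iff.2 hdmem.1 hm⟩))
      · exact h g m ((hJt g m).2 (Or.inr
          ⟨Concept.extent_subset_extent_iff.2 hdmem.2 hg, Concept.intent_subset_intent_iff.2 hcmem.1 hm⟩))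
    · intro h g m hgm
      rcases (hJt g m).1 hgm with hI | ⟨hg, hm⟩
      · exact hJ.1 g m hI
      · exact (h c₂ ⟨hc, le_refl _⟩ c₁ ⟨le_refl _, hc⟩).1 g hg m hm
  · set P : (G → M → Prop) → Prop :=
      fun J => IsBlockRel I J ∧ ∀ g m, Jt g m → J g m with hP
    refine ⟨fun g m => ∀ J, P J → J g m, ⟨?_, ?_, ?_⟩, ?_, ?_⟩
    · intro g m hI J hJ
      exact hJ.1.1 g m hI
    · intro g
      set X : Set G := ⋃ J : {J // P J}, lowerPolar I {m | J.1 g m} with hX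
      refine ⟨⟨lowerPolar I (upperPolar I X), upperPolar I X,
        upperPolar_lowerPolar_upperPolar I X, rfl⟩, ?_⟩
      ext m
      constructor
      · intro h g' hg'
        obtain ⟨⟨J, hJ⟩, hg'⟩ := Set.mem_iUnion.1 hg'
        exact hg' (h J hJ)
      · intro h J hJ
        obtain ⟨cJ, hcJ⟩ := hJ.1.2.1 g
        have : m ∈ {m' | J g m'} := by
          rw [hcJ, ← cJ.upperPolar_extent, ← cJ.lowerPolar_intent]
          intro g' hg'
          rw [← hcJ] at hg'
          exact h (Set.mem_iUnion.2 ⟨⟨J, hJ⟩, hg'⟩)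
        exact this
    · intro m
      set Y : Set M := ⋃ J : {J // P J}, upperPolar I {g' | J.1 g' m} with hY
      refine ⟨⟨lowerPolar I Y, upperPolar I (lowerPolar I Y),
        rfl, lowerPolar_upperPolar_lowerPolar I Y⟩, ?_⟩
      ext g
      constructor
      · intro h m' hm'
        obtain ⟨⟨J, hJ⟩, hm'⟩ := Set.mem_iUnion.1 hm'
        exact hm' (h J hJ)
      · intro h J hJ
        obtain ⟨cJ, hcJ⟩ := hJ.1.2.2 m
        have : g ∈ {g' | J g' m} := by
          rw [hcJ, ← cJ.lowerPolar_intent, ← cJ.upperPolar_extent]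
          intro m' hm'
          rw [← hcJ] at hm'
          exact h (Set.mem_iUnion.2 ⟨⟨J, hJ⟩, hm'⟩)
        exact this
    · intro g m hgm J hJ
      exact hJ.2 g m hgm
    · intro J hJ hJt'
      refine ⟨fun g m h => h J ⟨hJ, hJt'⟩, fun c d ⟨h1, h2⟩ =>
        ⟨fun g hg m hm => h1 g hg m hm J ⟨hJ, hJt'⟩,
         fun g hg m hm => h2 g hg m hm J ⟨hJ, hJt'⟩⟩⟩
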